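/- arXiv:2205.08047 — 3 statements merged into one kernel-verified Lean document; each statement's English description precedes it below -/
import Mathlib

section
/- Suppose A = X D Xᵀ where XᵀX is a diagonal matrix and D is diagonal with diagonal entries in {+1, −1}. Then the matrix absolute value satisfies |A| = X Xᵀ. -/
open Matrix

noncomputable def matAbs {n : Type*} [Fintype n] [DecidableEq n] (A : Matrix n n ℝ) :
    Matrix n n ℝ :=
  (Matrix.posSemidef_conjTranspose_mul_self A).1.eigenvectorUnitary.1 *
    diagonal ((↑) ∘ (√·) ∘ (Matrix.posSemidef_conjTranspose_mul_self A).1.eigenvalues) *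
    (star (Matrix.posSemidef_conjTranspose_mul_self A).1.eigenvectorUnitary : Matrix n n ℝ)

theorem matAbs_of_sign_diag (n d : ℕ) (X : Matrix (Fin n) (Fin d) ℝ) (f : Fin d → ℝ)
    (hf : ∀ i, f i = 1 ∨ f i = -1) (hXX : (Xᵀ * X).IsDiag) :
    matAbs (X * Matrix.diagonal f * Xᵀ) = X * Xᵀ := by
  have hdiag : Matrix.diagonal (Matrix.diag (Xᵀ * X)) = Xᵀ * X := hXX.diagonal_diag
  have hkey : Matrix.diagonal f * (Xᵀ * X) * Matrix.diagonal f = Xᵀ * X := by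
    rw [← hdiag, diagonal_mul_diagonal, diagonal_mul_diagonal]
    ext i j
    rcases eq_or_ne i j with rfl | hij
    · rcases hf i with h | h <;> simp [h, Matrix.diag]
    · simp [Matrix.diagonal_apply_ne _ hij]
  have hsq : (X * Xᵀ) ^ 2 =
      (X * Matrix.diagonal f * Xᵀ)ᴴ * (X * Matrix.diagonal f * Xᵀ) := by
    have h1 : (X * Matrix.diagonal f * Xᵀ)ᴴ = X * Matrix.diagonal f * Xᵀ := by
      simp [conjTranspose_mul, Matrix.mul_assoc, Matrix.diagonal_conjTranspose]
    rw [h1, pow_two]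
    calc X * Xᵀ * (X * Xᵀ) = X * (Xᵀ * X) * Xᵀ := by
          simp [Matrix.mul_assoc]
      _ = X * (Matrix.diagonal f * (Xᵀ * X) * Matrix.diagonal f) * Xᵀ := by rw [hkey]
      _ = X * Matrix.diagonal f * Xᵀ * (X * Matrix.diagonal f * Xᵀ) := by
          simp [Matrix.mul_assoc]
  have hP : (X * Xᵀ).PosSemidef := by
    simpa using Matrix.posSemidef_conjTranspose_mul_self Xᵀ
  open scoped MatrixOrder in
  have hB := (Matrix.posSemidef_conjTranspose_mul_self (X * Matrix.diagonal f * Xᵀ))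
  open scoped MatrixOrder in
  have e1 : matAbs (X * Matrix.diagonal f * Xᵀ) =
      cfc Real.sqrt ((X * Matrix.diagonal f * Xᵀ)ᴴ * (X * Matrix.diagonal f * Xᵀ)) := by
    rw [hB.1.cfc_eq]
    simp only [matAbs, IsHermitian.cfc, Unitary.conjStarAlgAut_apply]
    rfl
  open scoped MatrixOrder in
  rw [e1, ← cfcₙ_eq_cfc (hf0 := Real.sqrt_zero), ← CFC.sqrt_eq_real_sqrt _ hB.nonneg]
  open scoped MatrixOrder in
  exact CFC.sqrt_unique (by rw [← pow_two]; exact hsq) hP.nonneg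
end

section
/- Let A = c·J_n + d·I_n where J_n is the all-ones n×n matrix. Then |A| = c'·J_n + d'·I_n with c' = (|cn + d| − |d|)/n and d' = |d|. -/
open Matrix

/-- The all-ones matrix `J = 1ₙ 1ₙᵀ`. -/
def allOnes (n : ℕ) : Matrix (Fin n) (Fin n) ℝ := Matrix.of fun _ _ => (1 : ℝ)

lemma allOnes_mul_allOnes (n : ℕ) : allOnes n * allOnes n = (n : ℝ) • allOnes n := by
  ext i j
  simp [allOnes, Matrix.mul_apply]

lemma allOnes_posSemidef (n : ℕ) : (allOnes n).PosSemidef := by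
  refine .of_dotProduct_mulVec_nonneg ?_ ?_
  · ext i j; simp [allOnes]
  · intro x
    have h1 : (allOnes n) *ᵥ x = fun _ => ∑ j, x j := by
      ext i; simp [allOnes, Matrix.mulVec, dotProduct]
    rw [h1]
    have h2 : star x ⬝ᵥ (fun _ => ∑ j, x j) = (∑ j, x j) * (∑ j, x j) := by
      simp [dotProduct, ← Finset.sum_mul, mul_comm]
    rw [h2]
    exact mul_self_nonneg _

lemma posSemidef_smul' {m : Type*} [Fintype m] {r : ℝ} (hr : 0 ≤ r)
    {M : Matrix m m ℝ} (hM : M.PosSemidef) : (r • M).PosSemidef := by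
  refine .of_dotProduct_mulVec_nonneg ?_ ?_
  · show (r • M)ᴴ = r • M
    rw [conjTranspose_smul, hM.1.eq]; simp
  · intro x
    rw [smul_mulVec, dotProduct_smul]
    exact mul_nonneg hr (hM.dotProduct_mulVec_nonneg x)

lemma mul_expand (n : ℕ) (a b a' b' : ℝ) :
    (a • allOnes n + b • (1 : Matrix (Fin n) (Fin n) ℝ)) *
      (a' • allOnes n + b' • (1 : Matrix (Fin n) (Fin n) ℝ)) =
    (a * a' * n + a * b' + b * a') • allOnes n +
      (b * b') • (1 : Matrix (Fin n) (Fin n) ℝ) := by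
  rw [add_mul, mul_add, mul_add, smul_mul_assoc, smul_mul_assoc, smul_mul_assoc,
    smul_mul_assoc, mul_smul_comm, mul_smul_comm, mul_smul_comm, mul_smul_comm,
    allOnes_mul_allOnes]
  simp only [one_mul, mul_one]
  module

theorem matAbs_ones_plus_id (n : ℕ) (hn : 1 ≤ n) (c d : ℝ) :
    matAbs (c • allOnes n + d • (1 : Matrix (Fin n) (Fin n) ℝ)) =
      ((|c * n + d| - |d|) / n) • allOnes n + |d| • (1 : Matrix (Fin n) (Fin n) ℝ) := by
  have hn0 : (n : ℝ) ≠ 0 := by positivity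
  set A : Matrix (Fin n) (Fin n) ℝ := c • allOnes n + d • 1 with hA
  set B : Matrix (Fin n) (Fin n) ℝ := ((|c * n + d| - |d|) / n) • allOnes n + |d| • 1 with hB
  have hPP : ((n:ℝ)⁻¹ • allOnes n) * ((n:ℝ)⁻¹ • allOnes n) = (n:ℝ)⁻¹ • allOnes n := by
    rw [smul_mul_assoc, mul_smul_comm, allOnes_mul_allOnes, smul_smul, smul_smul,
      mul_assoc, inv_mul_cancel₀ hn0, mul_one]
  -- B is positive semidefinite
  have hQ : (1 - (n : ℝ)⁻¹ • allOnes n).PosSemidef := by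
    set Q : Matrix (Fin n) (Fin n) ℝ := 1 - (n : ℝ)⁻¹ • allOnes n with hQdef
    have hherm : Qᴴ = Q := by
      rw [hQdef, conjTranspose_sub, conjTranspose_smul, conjTranspose_one,
        (allOnes_posSemidef n).1.eq]
      simp
    have hsq : Q * Q = Q := by
      rw [hQdef, sub_mul, mul_sub, mul_sub, hPP]
      simp only [one_mul, mul_one]
      abel
    have hQQ : Q = Qᴴ * Q := by rw [hherm, hsq]
    rw [hQQ]
    exact Matrix.posSemidef_conjTranspose_mul_self Q
  have hBdecomp : B = |c * n + d| • ((n : ℝ)⁻¹ • allOnes n) +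
      |d| • (1 - (n : ℝ)⁻¹ • allOnes n) := by
    rw [hB, smul_sub, smul_smul, smul_smul, div_eq_mul_inv, sub_mul]
    module
  have hBpsd : B.PosSemidef := by
    rw [hBdecomp]
    exact (posSemidef_smul' (abs_nonneg _)
      (posSemidef_smul' (by positivity) (allOnes_posSemidef n))).add
      (posSemidef_smul' (abs_nonneg _) hQ)
  -- B ^ 2 = Aᴴ * A
  have hAherm : Aᴴ = A := by
    rw [hA, conjTranspose_add, conjTranspose_smul, conjTranspose_smul,
      conjTranspose_one, (allOnes_posSemidef n).1.eq]
    simp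
  have hsq : B ^ 2 = Aᴴ * A := by
    rw [hAherm, pow_two, hA, hB, mul_expand, mul_expand]
    have h1 : |c * n + d| ^ 2 = (c * n + d) ^ 2 := sq_abs _
    have h2 : |d| ^ 2 = d ^ 2 := sq_abs _
    congr 1
    · congr 1
      field_simp
      linear_combination h1 - h2
    · congr 1
      exact abs_mul_abs_self d
  rw [matAbs]
  have hC := Matrix.posSemidef_conjTranspose_mul_self A
  open scoped MatrixOrder in
  have key : CFC.sqrt (Aᴴ * A) = B :=
    CFC.sqrt_unique (by rw [← hsq, pow_two]) hBpsd.nonneg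
  rw [← key, CFC.sqrt_eq_cfc, cfc_nnreal_eq_real _ _, hC.1.cfc_eq]
  simp [IsHermitian.cfc, Function.comp_def]
  congr 3
  funext i
  exact congrArg _ (max_eq_left (hC.eigenvalues_nonneg i)).symm
end

section
/- If A and B are real symmetric matrices, then the matrix absolute value of their Kronecker product satisfies |A ⊗ B| = |A| ⊗ |B|. -/
open Matrix Kronecker

lemma Matrix.PosSemidef.kron {m n : ℕ} {X : Matrix (Fin m) (Fin m) ℝ} {Y : Matrix (Fin n) (Fin n) ℝ}
    (hX : X.PosSemidef) (hY : Y.PosSemidef) : (X ⊗ₖ Y).PosSemidef := by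
  exact hX.kronecker hY

open scoped MatrixOrder in
lemma matAbs_eq_sqrt {n : Type*} [Fintype n] [DecidableEq n] (A : Matrix n n ℝ) :
    matAbs A = CFC.sqrt (Aᴴ * A) := by
  have hP := Matrix.posSemidef_conjTranspose_mul_self A
  rw [CFC.sqrt_eq_real_sqrt _ hP.nonneg, cfcₙ_eq_cfc, hP.1.cfc_eq, IsHermitian.cfc, Unitary.conjStarAlgAut_apply]
  rfl

open scoped MatrixOrder in
theorem matAbs_kronecker (m n : ℕ) (A : Matrix (Fin m) (Fin m) ℝ)
    (B : Matrix (Fin n) (Fin n) ℝ) (hA : A.IsSymm) (hB : B.IsSymm) :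
    matAbs (A ⊗ₖ B) = matAbs A ⊗ₖ matAbs B := by
  rw [matAbs_eq_sqrt, matAbs_eq_sqrt, matAbs_eq_sqrt]
  have hPA := (CFC.sqrt_nonneg (Aᴴ * A)).posSemidef
  have hPB := (CFC.sqrt_nonneg (Bᴴ * B)).posSemidef
  refine CFC.sqrt_unique ?_ (hPA.kron hPB).nonneg
  rw [← Matrix.mul_kronecker_mul,
    CFC.sqrt_mul_sqrt_self _ (Matrix.posSemidef_conjTranspose_mul_self A).nonneg,
    CFC.sqrt_mul_sqrt_self _ (Matrix.posSemidef_conjTranspose_mul_self B).nonneg]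
  have : Aᴴ ⊗ₖ Bᴴ = (A ⊗ₖ B)ᴴ := by
    ext i j
    simp [Matrix.conjTranspose_apply]
  rw [Matrix.mul_kronecker_mul, this]
end
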